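/- Let φ : K → K' be a geometric and dense morphism of ⊗-triangulated categories and assume K' is molecular. Let Φ = Spc(φ) : Spc(K') → Spc(K) be the induced map and let V ⊆ Spc(K) be an open subset. Then φ(J(V)) ⊆ J(Φ⁻¹(V)), i.e. for every object x ∈ J(V) one has φ(x) ∈ J(Φ⁻¹(V)). -/
import Mathlib


namespace Balmer

open CategoryTheory CategoryTheory.Limits CategoryTheory.Pretriangulated ZeroObject

universe v u v' u'

variable {K : Type u} [Category.{v} K] [Preadditive K] [HasZeroObject K] [HasShift K ℤ]
  [∀ n : ℤ, (shiftFunctor K n).Additive] [Pretriangulated K] [HasBinaryBiproducts K]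

/-- A `⊗`-thick subcategory of `K` (identified with its set of objects):
a full triangulated subcategory, closed under isomorphisms, translations, cones and
direct summands, which is moreover an ideal for the tensor product on both sides. -/
def IsTensorThick (tensor : K ⥤ K ⥤ K) (S : Set K) : Prop :=
  (0 : K) ∈ S ∧
  (∀ ⦃a b : K⦄, (a ≅ b) → a ∈ S → b ∈ S) ∧
  (∀ a ∈ S, ∀ n : ℤ, (shiftFunctor K n).obj a ∈ S) ∧
  (∀ T ∈ (distTriang K), T.obj₁ ∈ S → T.obj₂ ∈ S → T.obj₃ ∈ S) ∧
  (∀ a b : K, (a ⊞ b) ∈ S → a ∈ S ∧ b ∈ S) ∧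
  (∀ a ∈ S, ∀ b : K, (tensor.obj a).obj b ∈ S ∧ (tensor.obj b).obj a ∈ S)

/-- `⟨D⟩`, the smallest `⊗`-thick subcategory of `K` containing `D`. -/
def tensorSpan (tensor : K ⥤ K ⥤ K) (D : Set K) : Set K :=
  ⋂₀ {S : Set K | IsTensorThick tensor S ∧ D ⊆ S}

/-- A `⊗`-thick subcategory `A` is atomic if whenever `A ⊆ ⟨D⟩` for a collection of
objects `D`, there is some `d ∈ D` with `A ⊆ ⟨d⟩`. -/
def IsAtomic (tensor : K ⥤ K ⥤ K) (A : Set K) : Prop :=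
  IsTensorThick tensor A ∧
    ∀ D : Set K, A ⊆ tensorSpan tensor D → ∃ d ∈ D, A ⊆ tensorSpan tensor {d}

/-- The spectrum `Spc(K,⊗)`: the collection of all nonzero atomic `⊗`-thick
subcategories of `K`. -/
def Spc (tensor : K ⥤ K ⥤ K) : Set (Set K) :=
  {A | IsAtomic tensor A ∧ ∃ a ∈ A, ¬ IsZero a}

/-- The basic subset `U(a) = {B ∈ Spc(K) | B ⊄ ⟨a⟩}`. -/
def SpcU (tensor : K ⥤ K ⥤ K) (a : K) : Set (Set K) :=
  {B ∈ Spc tensor | ¬ B ⊆ tensorSpan tensor {a}}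

/-- The spectrum as a type. -/
abbrev SpcTop (tensor : K ⥤ K ⥤ K) : Type u := {A : Set K // A ∈ Spc tensor}

/-- The topology on `Spc(K,⊗)` having the subsets `U(a)`, `a ∈ K`, as a basis of
open subsets. -/
instance spcTopology (tensor : K ⥤ K ⥤ K) : TopologicalSpace (SpcTop tensor) :=
  TopologicalSpace.generateFrom
    {V : Set (SpcTop tensor) | ∃ a : K, V = {B | ¬ B.1 ⊆ tensorSpan tensor {a}}}

variable {L : Type u'} [Category.{v'} L] [Preadditive L] [HasZeroObject L] [HasShift L ℤ]
  [∀ n : ℤ, (shiftFunctor L n).Additive] [Pretriangulated L] [HasBinaryBiproducts L]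

/-- A morphism `φ` of `⊗`-triangulated categories is geometric if `⟨φ(-)⟩`
commutes with arbitrary intersections of `⊗`-thick subcategories. -/
def IsGeometric (tensorK : K ⥤ K ⥤ K) (tensorL : L ⥤ L ⥤ L) (φ : K ⥤ L) : Prop :=
  ∀ 𝒞 : Set (Set K), (∀ C ∈ 𝒞, IsTensorThick tensorK C) →
    tensorSpan tensorL (φ.obj '' ⋂₀ 𝒞) = ⋂ C ∈ 𝒞, tensorSpan tensorL (φ.obj '' C)

/-- A morphism `φ` of `⊗`-triangulated categories is dense if `⟨φ(K)⟩ = L`. -/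
def IsDense (tensorL : L ⥤ L ⥤ L) (φ : K ⥤ L) : Prop :=
  tensorSpan tensorL (Set.range φ.obj) = Set.univ

/-- The map `Φ = Spc(φ)` underlying a geometric and dense morphism `φ`:
`Φ(C)` is the intersection of all `⊗`-thick subcategories `H ⊆ K` such that
`C ⊆ ⟨φ(H)⟩`. -/
def PhiMap (tensorK : K ⥤ K ⥤ K) (tensorL : L ⥤ L ⥤ L) (φ : K ⥤ L) (C : Set L) : Set K :=
  ⋂₀ {H : Set K | IsTensorThick tensorK H ∧ C ⊆ tensorSpan tensorL (φ.obj '' H)}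

/-- `J(V) = ⟨⋃ of the atomic subcategories outside V⟩`. -/
def Jcat (tensor : K ⥤ K ⥤ K) (V : Set (SpcTop tensor)) : Set K :=
  tensorSpan tensor (⋃ A ∈ {A : SpcTop tensor | A ∉ V}, A.1)

/-- `K` is molecular if every `⊗`-thick subcategory of `K` is generated by the atomic
subcategories it contains. -/
def IsMolecular (tensor : K ⥤ K ⥤ K) : Prop :=
  ∀ B : Set K, IsTensorThick tensor B →
    B = tensorSpan tensor (⋃ A ∈ {A : SpcTop tensor | A.1 ⊆ B}, A.1)


lemma isTensorThick_tensorSpan (tensor : K ⥤ K ⥤ K) (D : Set K) :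
    IsTensorThick tensor (tensorSpan tensor D) := by
  refine ⟨?_, ?_, ?_, ?_, ?_, ?_⟩
  · exact fun S hS => hS.1.1
  · exact fun a b e ha S hS => hS.1.2.1 e (ha S hS)
  · exact fun a ha n S hS => hS.1.2.2.1 a (ha S hS) n
  · exact fun T hT h1 h2 S hS => hS.1.2.2.2.1 T hT (h1 S hS) (h2 S hS)
  · exact fun a b hab =>
      ⟨fun S hS => (hS.1.2.2.2.2.1 a b (hab S hS)).1,
       fun S hS => (hS.1.2.2.2.2.1 a b (hab S hS)).2⟩
  · exact fun a ha b =>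
      ⟨fun S hS => (hS.1.2.2.2.2.2 a (ha S hS) b).1,
       fun S hS => (hS.1.2.2.2.2.2 a (ha S hS) b).2⟩

lemma subset_tensorSpan (tensor : K ⥤ K ⥤ K) (D : Set K) : D ⊆ tensorSpan tensor D :=
  fun _x hx _S hS => hS.2 hx

lemma tensorSpan_subset (tensor : K ⥤ K ⥤ K) {D S : Set K} (hS : IsTensorThick tensor S)
    (hD : D ⊆ S) : tensorSpan tensor D ⊆ S :=
  Set.sInter_subset_of_mem ⟨hS, hD⟩

lemma tensorSpan_mono (tensor : K ⥤ K ⥤ K) {D D' : Set K} (h : D ⊆ D') :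
    tensorSpan tensor D ⊆ tensorSpan tensor D' :=
  tensorSpan_subset tensor (isTensorThick_tensorSpan tensor D')
    (h.trans (subset_tensorSpan tensor D'))

lemma open_upward_aux (tensor : K ⥤ K ⥤ K) {V : Set (SpcTop tensor)}
    (hV : TopologicalSpace.GenerateOpen
      {W : Set (SpcTop tensor) | ∃ a : K, W = {B | ¬ B.1 ⊆ tensorSpan tensor {a}}} V)
    {X Y : SpcTop tensor} (hXY : X.1 ⊆ Y.1) : X ∈ V → Y ∈ V := by
  induction hV with
  | basic U hU =>
      obtain ⟨a, rfl⟩ := hU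
      exact fun hX hY => hX (hXY.trans hY)
  | univ => exact fun _ => trivial
  | inter U W _ _ ihU ihW => exact fun hX => ⟨ihU hX.1, ihW hX.2⟩
  | sUnion 𝒰 _ ih => exact fun ⟨U, hU𝒰, hXU⟩ => ⟨U, hU𝒰, ih U hU𝒰 hXU⟩

lemma open_upward (tensor : K ⥤ K ⥤ K) {V : Set (SpcTop tensor)} (hV : IsOpen V)
    {X Y : SpcTop tensor} (hXY : X.1 ⊆ Y.1) (hX : X ∈ V) : Y ∈ V :=
  open_upward_aux tensor hV hXY hX


/-- Lemma 5.10: if `φ : K ⥤ K'` is geometric (and dense) and `K'` is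
molecular, then for each open `V ⊆ Spc(K)` one has `φ(J(V)) ⊆ J(Φ⁻¹(V))`. -/
theorem stmt12 (tensorK : K ⥤ K ⥤ K) (tensorL : L ⥤ L ⥤ L)
    [∀ a : K, (tensorK.obj a).CommShift ℤ] [∀ a : K, (tensorK.obj a).IsTriangulated]
    [∀ b : K, (tensorK.flip.obj b).CommShift ℤ] [∀ b : K, (tensorK.flip.obj b).IsTriangulated]
    [∀ a : L, (tensorL.obj a).CommShift ℤ] [∀ a : L, (tensorL.obj a).IsTriangulated]
    [∀ b : L, (tensorL.flip.obj b).CommShift ℤ] [∀ b : L, (tensorL.flip.obj b).IsTriangulated]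
    (φ : K ⥤ L) [φ.CommShift ℤ] [φ.IsTriangulated]
    (e : ∀ a b : K, φ.obj ((tensorK.obj a).obj b) ≅ (tensorL.obj (φ.obj a)).obj (φ.obj b))
    (hgeo : IsGeometric tensorK tensorL φ) (hdense : IsDense tensorL φ)
    (hmol : IsMolecular tensorL)
    (Φ : SpcTop tensorL → SpcTop tensorK)
    (hΦ : ∀ C : SpcTop tensorL, (Φ C).1 = PhiMap tensorK tensorL φ C.1)
    (V : Set (SpcTop tensorK)) (hV : IsOpen V) :
    ∀ x ∈ Jcat tensorK V, φ.obj x ∈ Jcat tensorL (Φ ⁻¹' V) := by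
  intro x hx
  have hSthick : IsTensorThick tensorL (Jcat tensorL (Φ ⁻¹' V)) :=
    isTensorThick_tensorSpan _ _
  obtain ⟨h0, hiso, hshift, htri, hsum, htens⟩ := hSthick
  have hSthick : IsTensorThick tensorL (Jcat tensorL (Φ ⁻¹' V)) :=
    ⟨h0, hiso, hshift, htri, hsum, htens⟩
  -- the preimage of J(Φ⁻¹V) under φ is ⊗-thick
  have hT : IsTensorThick tensorK (φ.obj ⁻¹' (Jcat tensorL (Φ ⁻¹' V))) := by
    refine ⟨?_, ?_, ?_, ?_, ?_, ?_⟩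
    · exact hiso (φ.mapZeroObject).symm h0
    · exact fun a b e ha => hiso (φ.mapIso e) ha
    · intro a ha n
      exact hiso ((φ.commShiftIso n).symm.app a) (hshift _ ha n)
    · intro T hT h1 h2
      exact htri (φ.mapTriangle.obj T) (φ.map_distinguished T hT) h1 h2
    · intro a b hab
      haveI : PreservesBinaryBiproducts φ :=
        preservesBinaryBiproducts_of_preservesBiproducts φ
      exact hsum (φ.obj a) (φ.obj b) (hiso (φ.mapBiprod a b) hab)
    · intro a ha b
      refine ⟨hiso (e a b).symm (htens _ ha (φ.obj b)).1,
        hiso (e b a).symm (htens _ ha (φ.obj b)).2⟩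
  -- the generators of J(V) are sent into J(Φ⁻¹V)
  have hgen : (⋃ A ∈ {A : SpcTop tensorK | A ∉ V}, A.1) ⊆
      φ.obj ⁻¹' (Jcat tensorL (Φ ⁻¹' V)) := by
    intro a ha
    simp only [Set.mem_iUnion] at ha
    obtain ⟨A, hA, haA⟩ := ha
    have hAthick : IsTensorThick tensorK A.1 := A.2.1.1
    have hBthick : IsTensorThick tensorL (tensorSpan tensorL (φ.obj '' A.1)) :=
      isTensorThick_tensorSpan _ _
    have hsub : tensorSpan tensorL (φ.obj '' A.1) ⊆ Jcat tensorL (Φ ⁻¹' V) := by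
      rw [hmol _ hBthick]
      refine tensorSpan_subset tensorL hSthick ?_
      intro y hy
      simp only [Set.mem_iUnion] at hy
      obtain ⟨C, hCB, hyC⟩ := hy
      have hΦC : (Φ C).1 ⊆ A.1 := by
        rw [hΦ C]
        exact Set.sInter_subset_of_mem ⟨hAthick, hCB⟩
      have hCnot : C ∉ Φ ⁻¹' V := fun hCV => hA (open_upward tensorK hV hΦC hCV)
      refine subset_tensorSpan tensorL _ ?_
      simp only [Set.mem_iUnion]
      exact ⟨C, hCnot, hyC⟩
    exact hsub (subset_tensorSpan tensorL _ ⟨a, haA, rfl⟩)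
  exact tensorSpan_subset tensorK hT hgen hx


end Balmer
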